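/- For the variable hard sphere kernel with exponent ν ∈ [0,1], the weighted Laguerre product integral evaluates in closed form: ∫_0^∞ L_{n}^{(l+1/2)}(r) L_{n'}^{(l+1/2)}(r) r^{l+(ν+1)/2} e^{−r} dr = (−1)^{n+n'} Γ(l + 1 + (ν+1)/2) Σ_{k=0}^{min(n,n')} C(ν/2, n−k) C(ν/2, n'−k) C(k + l + (ν+1)/2, k), where C(a, j) denotes the generalized binomial coefficient a(a−1)⋯(a−j+1)/j!. -/

import Mathlib

noncomputable section
open Real MeasureTheory

/-- Generalized binomial coefficient `C(a, j) = a(a-1)⋯(a-j+1)/j!`. -/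
def genBinom (a : ℝ) (j : ℕ) : ℝ := (∏ i ∈ Finset.range j, (a - i)) / (Nat.factorial j)

/-- The generalized Laguerre polynomial `L_n^{(α)}(x) = Σ_{k=0}^n (-1)^k C(n+α, n-k) x^k / k!`. -/
def laguerre (α : ℝ) (n : ℕ) (x : ℝ) : ℝ :=
  ∑ k ∈ Finset.range (n + 1),
    (-1 : ℝ) ^ k * genBinom ((n : ℝ) + α) (n - k) * x ^ k / (Nat.factorial k)

lemma ascPoch_eval (a : ℝ) (j : ℕ) :
    (ascPochhammer ℝ j).eval a = ∏ i ∈ Finset.range j, (a + i) := by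
  induction j with
  | zero => simp
  | succ j ih => rw [ascPochhammer_succ_right, Finset.prod_range_succ, ← ih]; simp

lemma genBinom_eq_choose (a : ℝ) (j : ℕ) : genBinom a j = Ring.choose a j := by
  have h := Ring.descPochhammer_eq_factorial_smul_choose (R := ℝ) a j
  have h2 : (descPochhammer ℤ j).smeval a = ∏ i ∈ Finset.range j, (a - i) := by
    rw [Polynomial.descPochhammer_smeval_eq_ascPochhammer,
      Polynomial.ascPochhammer_smeval_eq_eval, ascPoch_eval, ← Finset.prod_range_reflect]
    apply Finset.prod_congr rfl
    intro i hi
    simp only [Finset.mem_range] at hi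
    have : (↑(j - 1 - i) : ℝ) = (j : ℝ) - 1 - i := by
      have h1 : i ≤ j - 1 := by omega
      have h2 : 1 ≤ j := by omega
      push_cast [Nat.cast_sub h1, Nat.cast_sub h2]
      ring
    rw [this]; ring
  rw [h2, nsmul_eq_mul] at h
  rw [genBinom, h]
  field_simp [Nat.factorial_ne_zero]

lemma genBinom_vandermonde (x y : ℝ) (m : ℕ) :
    ∑ k ∈ Finset.range (m + 1), genBinom x k * genBinom y (m - k) = genBinom (x + y) m := by
  simp only [genBinom_eq_choose]
  rw [Ring.add_choose_eq m (Commute.all x y), Finset.Nat.sum_antidiagonal_eq_sum_range_succ_mk]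

lemma genBinom_zero (a : ℝ) : genBinom a 0 = 1 := by simp [genBinom]

lemma prod_shift (a : ℝ) (j : ℕ) :
    ∏ i ∈ Finset.range j, (a - i) = ∏ i ∈ Finset.range j, (a - j + 1 + i) := by
  rw [← Finset.prod_range_reflect]
  apply Finset.prod_congr rfl
  intro i hi
  simp only [Finset.mem_range] at hi
  have : (↑(j - 1 - i) : ℝ) = (j : ℝ) - 1 - i := by
    have h1 : i ≤ j - 1 := by omega
    have h2 : 1 ≤ j := by omega
    push_cast [Nat.cast_sub h1, Nat.cast_sub h2]; ring
  rw [this]; ring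

lemma prod_neg_aux (c : ℝ) (m : ℕ) :
    ∏ i ∈ Finset.range m, (-c - i) = (-1)^m * ∏ i ∈ Finset.range m, (c + i) := by
  calc ∏ i ∈ Finset.range m, (-c - i) = ∏ i ∈ Finset.range m, ((-1) * (c + i)) :=
        Finset.prod_congr rfl (fun i _ => by ring)
    _ = (-1)^m * ∏ i ∈ Finset.range m, (c + i) := by
        rw [Finset.prod_mul_distrib, Finset.prod_const, Finset.card_range]

lemma genBinom_neg (y : ℝ) (r : ℕ) : genBinom y r = (-1)^r * genBinom ((r:ℝ) - y - 1) r := by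
  unfold genBinom
  rw [prod_shift y r]
  have : ∏ i ∈ Finset.range r, ((r:ℝ) - y - 1 - i)
      = (-1)^r * ∏ i ∈ Finset.range r, ((y - r + 1) + i) := by
    have h2 : ∏ i ∈ Finset.range r, ((r:ℝ) - y - 1 - i)
        = ∏ i ∈ Finset.range r, (-(y - r + 1) - i) :=
      Finset.prod_congr rfl (fun i _ => by ring)
    rw [h2, prod_neg_aux]
  rw [this]
  have h3 : ∏ i ∈ Finset.range r, (y - ↑r + 1 + ↑i) = ∏ i ∈ Finset.range r, ((y - r + 1) + i) :=
    Finset.prod_congr rfl (fun i _ => by ring)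
  rw [h3, mul_div_assoc, ← mul_assoc, ← pow_add, Even.neg_one_pow ⟨r, rfl⟩, one_mul]

lemma genBinom_nat_zero {j k : ℕ} (h : j < k) : genBinom (j:ℝ) k = 0 := by
  unfold genBinom
  rw [Finset.prod_eq_zero (Finset.mem_range.mpr h) (by simp)]
  simp

lemma genBinom_shift (b : ℝ) (j : ℕ) :
    genBinom (b + j) j = (∏ i ∈ Finset.range j, (b + 1 + i)) / (Nat.factorial j) := by
  unfold genBinom
  rw [prod_shift]
  congr 1
  apply Finset.prod_congr rfl
  intro i _; ring

lemma genBinom_neg_eq (b : ℝ) (t : ℕ) :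
    (-1:ℝ)^t * genBinom (b + t) t = genBinom (-(b+1)) t := by
  rw [genBinom_shift]
  unfold genBinom
  have : ∏ i ∈ Finset.range t, (-(b+1) - i) = (-1)^t * ∏ i ∈ Finset.range t, (b + 1 + i) :=
    prod_neg_aux (b+1) t
  rw [this]
  ring

lemma genBinom_mul (b : ℝ) {k j : ℕ} (h : k ≤ j) :
    genBinom (b + j) j * genBinom ((j:ℝ)) k = genBinom (b + k) k * genBinom (b + j) (j - k) := by
  have hsplit : ∏ i ∈ Finset.range j, (b + 1 + i)
      = (∏ i ∈ Finset.range k, (b + 1 + i)) * ∏ i ∈ Finset.range (j - k), (b + 1 + (k + i)) := by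
    have hj : j = k + (j - k) := by omega
    conv_lhs => rw [hj, Finset.prod_range_add]
    push_cast
    ring_nf
  have hdesc : ∏ i ∈ Finset.range k, ((j:ℝ) - i) = (j.descFactorial k : ℝ) := by
    rw [Nat.descFactorial_eq_prod_range, Nat.cast_prod]
    exact Finset.prod_congr rfl (fun i hi => by
      rw [Nat.cast_sub (le_of_lt (lt_of_lt_of_le (Finset.mem_range.mp hi) h))])
  have hfact : (j.descFactorial k) * (j - k).factorial = j.factorial := by
    have h5 := Nat.descFactorial_mul_descFactorial (n := j) (m := j) h
    rw [Nat.descFactorial_self, Nat.descFactorial_self] at h5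
    rw [mul_comm] at h5
    exact h5
  have hlast : genBinom (b + j) (j - k)
      = (∏ i ∈ Finset.range (j - k), (b + 1 + (k + i))) / (Nat.factorial (j - k)) := by
    unfold genBinom
    rw [prod_shift]
    congr 1
    apply Finset.prod_congr rfl
    intro i _
    have : ((j - k : ℕ) : ℝ) = (j : ℝ) - k := by
      rw [Nat.cast_sub h]
    rw [this]; push_cast; ring
  rw [genBinom_shift b j, genBinom_shift b k, hlast, hsplit]
  unfold genBinom
  rw [hdesc]
  have h1 : ((j.factorial : ℝ)) ≠ 0 := Nat.cast_ne_zero.mpr (Nat.factorial_ne_zero j)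
  have h2 : ((k.factorial : ℝ)) ≠ 0 := Nat.cast_ne_zero.mpr (Nat.factorial_ne_zero k)
  have h3 : (((j - k).factorial : ℝ)) ≠ 0 := Nat.cast_ne_zero.mpr (Nat.factorial_ne_zero (j - k))
  have hfR : (j.descFactorial k : ℝ) * ((j - k).factorial : ℝ) = (j.factorial : ℝ) := by
    rw [← Nat.cast_mul, hfact]
  field_simp
  rw [← hfR]; ring

lemma Gamma_prod (s : ℝ) (hs : 0 < s) (m : ℕ) :
    Real.Gamma (s + m) = Real.Gamma s * ∏ i ∈ Finset.range m, (s + i) := by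
  induction m with
  | zero => simp
  | succ m ih =>
    have h1 : s + (m + 1 : ℕ) = (s + m) + 1 := by push_cast; ring
    rw [h1, Real.Gamma_add_one (by positivity), ih, Finset.prod_range_succ]
    ring

lemma integrable_rpow_exp {c : ℝ} (hc : -1 < c) :
    IntegrableOn (fun r : ℝ => r ^ c * Real.exp (-r)) (Set.Ioi (0:ℝ)) := by
  have h := Real.GammaIntegral_convergent (show 0 < c + 1 by linarith)
  refine h.congr_fun ?_ measurableSet_Ioi
  intro x _
  simp [add_sub_cancel_right, mul_comm]

lemma integral_rpow_exp {c : ℝ} (hc : -1 < c) :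
    ∫ r in Set.Ioi (0:ℝ), r ^ c * Real.exp (-r) = Real.Gamma (c + 1) := by
  rw [Real.Gamma_eq_integral (show 0 < c + 1 by linarith)]
  congr 1
  ext x
  rw [add_sub_cancel_right, mul_comm]

lemma step1 (n' j : ℕ) (u b : ℝ) :
    ∑ k ∈ Finset.range (n' + 1),
      ((-1:ℝ)^k * genBinom ((n':ℝ) + (b - u)) (n' - k) / (Nat.factorial k)) *
        ∏ i ∈ Finset.range (j + k), (b + 1 + i)
    = (∏ i ∈ Finset.range j, (b + 1 + i)) * ((-1)^n' * genBinom (u + j) n') := by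
  have hterm : ∀ k ∈ Finset.range (n' + 1),
      ((-1:ℝ)^k * genBinom ((n':ℝ) + (b - u)) (n' - k) / (Nat.factorial k)) *
        ∏ i ∈ Finset.range (j + k), (b + 1 + i)
      = (∏ i ∈ Finset.range j, (b + 1 + i)) *
          (genBinom (-(b + j + 1)) k * genBinom ((n':ℝ) + (b - u)) (n' - k)) := by
    intro k _
    rw [Finset.prod_range_add]
    have h2 : ∏ i ∈ Finset.range k, (b + 1 + (j + i : ℕ)) = ∏ i ∈ Finset.range k, ((b + j) + 1 + i) :=
      Finset.prod_congr rfl (fun i _ => by push_cast; ring)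
    have h3 : genBinom ((b + j) + k) k = (∏ i ∈ Finset.range k, ((b + j) + 1 + i)) / (Nat.factorial k) :=
      genBinom_shift (b + j) k
    have h4 : genBinom (-(b + (j:ℝ) + 1)) k = (-1:ℝ)^k * genBinom ((b + j) + k) k := by
      rw [genBinom_neg_eq (b + j) k]
    rw [h2, h4, h3]
    field_simp
  rw [Finset.sum_congr rfl hterm, ← Finset.mul_sum]
  congr 1
  rw [genBinom_vandermonde (-(b + j + 1)) ((n':ℝ) + (b - u)) n']
  have h5 : -(b + (j:ℝ) + 1) + ((n':ℝ) + (b - u)) = (n':ℝ) - u - j - 1 := by ring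
  rw [h5, genBinom_neg ((n':ℝ) - u - (j:ℝ) - 1) n']
  congr 2
  ring

lemma step2_zero (n k : ℕ) (u b : ℝ) (hk : n < k) :
    ∑ j ∈ Finset.range (n + 1), (-1:ℝ)^j * genBinom ((n:ℝ) + (b - u)) (n - j) *
      genBinom (b + j) j * genBinom ((j:ℝ)) k = 0 := by
  apply Finset.sum_eq_zero
  intro j hj
  rw [genBinom_nat_zero (lt_of_le_of_lt (Nat.lt_succ_iff.mp (Finset.mem_range.mp hj)) hk)]
  ring

lemma step2 (n k : ℕ) (u b : ℝ) (hk : k ≤ n) :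
    ∑ j ∈ Finset.range (n + 1), (-1:ℝ)^j * genBinom ((n:ℝ) + (b - u)) (n - j) *
      genBinom (b + j) j * genBinom ((j:ℝ)) k
    = (-1)^n * genBinom (b + k) k * genBinom u (n - k) := by
  rw [Finset.range_eq_Ico, ← Finset.sum_Ico_consecutive _ (Nat.zero_le k) (by omega : k ≤ n + 1)]
  have hzero : ∑ j ∈ Finset.Ico 0 k, (-1:ℝ)^j * genBinom ((n:ℝ) + (b - u)) (n - j) *
      genBinom (b + j) j * genBinom ((j:ℝ)) k = 0 := by
    apply Finset.sum_eq_zero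
    intro j hj
    rw [genBinom_nat_zero (Finset.mem_Ico.mp hj).2]
    ring
  rw [hzero, zero_add, Finset.sum_Ico_eq_sum_range]
  have hnk : n + 1 - k = n - k + 1 := by omega
  rw [hnk]
  have hterm : ∀ t ∈ Finset.range (n - k + 1),
      (-1:ℝ)^(k + t) * genBinom ((n:ℝ) + (b - u)) (n - (k + t)) *
        genBinom (b + (k + t : ℕ)) (k + t) * genBinom (((k + t : ℕ):ℝ)) k
      = ((-1:ℝ)^k * genBinom (b + k) k) *
          (genBinom (-((b + k) + 1)) t * genBinom ((n:ℝ) + (b - u)) ((n - k) - t)) := by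
    intro t _
    have hmul := genBinom_mul b (show k ≤ k + t by omega)
    rw [show k + t - k = t from by omega] at hmul
    have h9 : genBinom (b + ((k + t:ℕ):ℝ)) t = genBinom ((b + (k:ℝ)) + t) t := by
      congr 1; push_cast; ring
    have h8 : (-1:ℝ)^t * genBinom ((b + (k:ℝ)) + t) t = genBinom (-((b + (k:ℝ)) + 1)) t :=
      genBinom_neg_eq (b + k) t
    rw [show n - (k + t) = (n - k) - t from by omega, mul_assoc, hmul, h9, pow_add, ← h8]
    ring
  rw [Finset.sum_congr rfl hterm, ← Finset.mul_sum]
  rw [genBinom_vandermonde (-((b + k) + 1)) ((n:ℝ) + (b - u)) (n - k)]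
  have h11 : -((b + (k:ℝ)) + 1) + ((n:ℝ) + (b - u)) = (n:ℝ) - u - k - 1 := by ring
  rw [h11, genBinom_neg ((n:ℝ) - u - (k:ℝ) - 1) (n - k)]
  have h12 : ((n - k : ℕ) : ℝ) - ((n:ℝ) - u - (k:ℝ) - 1) - 1 = u := by
    rw [Nat.cast_sub hk]; ring
  rw [h12]
  have h13 : (-1:ℝ)^k * (-1:ℝ)^(n - k) = (-1:ℝ)^n := by
    rw [← pow_add]
    congr 1
    omega
  calc (-1:ℝ)^k * genBinom (b + k) k * ((-1)^(n-k) * genBinom u (n-k))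
      = ((-1:ℝ)^k * (-1:ℝ)^(n-k)) * genBinom (b + k) k * genBinom u (n-k) := by ring
    _ = _ := by rw [h13]

lemma key (n n' : ℕ) (u b : ℝ) :
    ∑ j ∈ Finset.range (n + 1), ∑ k ∈ Finset.range (n' + 1),
      (((-1:ℝ)^j * genBinom ((n:ℝ) + (b - u)) (n - j) / (Nat.factorial j)) *
        ((-1:ℝ)^k * genBinom ((n':ℝ) + (b - u)) (n' - k) / (Nat.factorial k))) *
          ∏ i ∈ Finset.range (j + k), (b + 1 + i)
    = (-1:ℝ)^(n + n') * ∑ k ∈ Finset.range (min n n' + 1),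
        genBinom u (n - k) * genBinom u (n' - k) * genBinom ((k:ℝ) + b) k := by
  have hstep : ∀ j ∈ Finset.range (n + 1),
      ∑ k ∈ Finset.range (n' + 1),
        (((-1:ℝ)^j * genBinom ((n:ℝ) + (b - u)) (n - j) / (Nat.factorial j)) *
          ((-1:ℝ)^k * genBinom ((n':ℝ) + (b - u)) (n' - k) / (Nat.factorial k))) *
            ∏ i ∈ Finset.range (j + k), (b + 1 + i)
      = (-1:ℝ)^n' * ∑ k ∈ Finset.range (n' + 1),
          ((-1:ℝ)^j * genBinom ((n:ℝ) + (b - u)) (n - j) * genBinom (b + j) j *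
            genBinom ((j:ℝ)) k) * genBinom u (n' - k) := by
    intro j _
    have e1 : ∑ k ∈ Finset.range (n' + 1),
        (((-1:ℝ)^j * genBinom ((n:ℝ) + (b - u)) (n - j) / (Nat.factorial j)) *
          ((-1:ℝ)^k * genBinom ((n':ℝ) + (b - u)) (n' - k) / (Nat.factorial k))) *
            ∏ i ∈ Finset.range (j + k), (b + 1 + i)
        = ((-1:ℝ)^j * genBinom ((n:ℝ) + (b - u)) (n - j) / (Nat.factorial j)) *
            ∑ k ∈ Finset.range (n' + 1),
              ((-1:ℝ)^k * genBinom ((n':ℝ) + (b - u)) (n' - k) / (Nat.factorial k)) *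
                ∏ i ∈ Finset.range (j + k), (b + 1 + i) := by
      rw [Finset.mul_sum]
      exact Finset.sum_congr rfl (fun k _ => by ring)
    rw [e1, step1 n' j u b]
    have e2 : genBinom (u + (j:ℝ)) n'
        = ∑ k ∈ Finset.range (n' + 1), genBinom ((j:ℝ)) k * genBinom u (n' - k) := by
      rw [genBinom_vandermonde ((j:ℝ)) u n']
      congr 1
      ring
    rw [e2]
    simp only [Finset.mul_sum]
    apply Finset.sum_congr rfl
    intro k _
    rw [genBinom_shift b j]
    have hj : ((Nat.factorial j : ℝ)) ≠ 0 := Nat.cast_ne_zero.mpr (Nat.factorial_ne_zero j)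
    field_simp
  rw [Finset.sum_congr rfl hstep, ← Finset.mul_sum, Finset.sum_comm]
  have h2 : ∀ k ∈ Finset.range (n' + 1),
      ∑ j ∈ Finset.range (n + 1),
        ((-1:ℝ)^j * genBinom ((n:ℝ) + (b - u)) (n - j) * genBinom (b + j) j *
          genBinom ((j:ℝ)) k) * genBinom u (n' - k)
      = genBinom u (n' - k) *
          ∑ j ∈ Finset.range (n + 1),
            (-1:ℝ)^j * genBinom ((n:ℝ) + (b - u)) (n - j) * genBinom (b + j) j *
              genBinom ((j:ℝ)) k := by
    intro k _
    rw [Finset.mul_sum]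
    exact Finset.sum_congr rfl (fun j _ => by ring)
  rw [Finset.sum_congr rfl h2]
  rw [← Finset.sum_subset (Finset.range_subset_range.mpr (by omega : min n n' + 1 ≤ n' + 1))
    (fun k hk hk' => by
      have h3 : n < k := by
        simp only [Finset.mem_range] at hk hk'
        omega
      rw [step2_zero n k u b h3, mul_zero])]
  have h4 : ∀ k ∈ Finset.range (min n n' + 1),
      genBinom u (n' - k) *
        ∑ j ∈ Finset.range (n + 1),
          (-1:ℝ)^j * genBinom ((n:ℝ) + (b - u)) (n - j) * genBinom (b + j) j *
            genBinom ((j:ℝ)) k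
      = (-1:ℝ)^n * (genBinom u (n - k) * genBinom u (n' - k) * genBinom ((k:ℝ) + b) k) := by
    intro k hk
    have hkn : k ≤ n := by
      simp only [Finset.mem_range] at hk
      omega
    rw [step2 n k u b hkn]
    have : genBinom (b + (k:ℝ)) k = genBinom ((k:ℝ) + b) k := by congr 1; ring
    rw [this]
    ring
  rw [Finset.sum_congr rfl h4, ← Finset.mul_sum, ← mul_assoc, ← pow_add, add_comm n' n]

/-- closed form of the weighted Laguerre product integral for the
variable-hard-sphere exponent `ν ∈ [0,1]`:
`∫₀^∞ L_n^{(l+1/2)}(r) L_{n'}^{(l+1/2)}(r) r^{l+(ν+1)/2} e^{−r} dr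
  = (−1)^{n+n'} Γ(l+1+(ν+1)/2) Σ_{k=0}^{min(n,n')} C(ν/2, n−k) C(ν/2, n'−k) C(k+l+(ν+1)/2, k)`. -/
theorem laguerre_vhs_integral
    (l n n' : ℕ) (ν : ℝ) (hν : ν ∈ Set.Icc (0 : ℝ) 1) :
    ∫ r in Set.Ioi (0 : ℝ),
        laguerre ((l : ℝ) + 1 / 2) n r * laguerre ((l : ℝ) + 1 / 2) n' r *
          r ^ ((l : ℝ) + (ν + 1) / 2) * Real.exp (-r)
      = (-1 : ℝ) ^ (n + n') * Real.Gamma ((l : ℝ) + 1 + (ν + 1) / 2) *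
          ∑ k ∈ Finset.range (min n n' + 1),
            genBinom (ν / 2) (n - k) * genBinom (ν / 2) (n' - k) *
              genBinom ((k : ℝ) + l + (ν + 1) / 2) k := by
  obtain ⟨hν0, hν1⟩ := hν
  have hl : (0:ℝ) ≤ l := Nat.cast_nonneg l
  set b : ℝ := (l:ℝ) + (ν + 1) / 2 with hb
  set u : ℝ := ν / 2 with hu
  have hb0 : 0 < b := by rw [hb]; linarith
  set c : ℕ → ℝ := fun j => (-1:ℝ)^j * genBinom ((n:ℝ) + (b - u)) (n - j) / (Nat.factorial j)
    with hc
  set d : ℕ → ℝ := fun k => (-1:ℝ)^k * genBinom ((n':ℝ) + (b - u)) (n' - k) / (Nat.factorial k)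
    with hd
  have hαb : (l:ℝ) + 1/2 = b - u := by rw [hb, hu]; ring
  have hexp : ∀ j k : ℕ, -1 < b + (j:ℝ) + (k:ℝ) := by
    intro j k
    have : (0:ℝ) ≤ j := Nat.cast_nonneg j
    have : (0:ℝ) ≤ k := Nat.cast_nonneg k
    linarith [Nat.cast_nonneg (α := ℝ) j, Nat.cast_nonneg (α := ℝ) k]
  have hInt : ∀ j k : ℕ,
      IntegrableOn (fun r : ℝ => r ^ (b + (j:ℝ) + (k:ℝ)) * Real.exp (-r)) (Set.Ioi 0) :=
    fun j k => integrable_rpow_exp (hexp j k)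
  have hcong : Set.EqOn
      (fun r : ℝ => laguerre ((l : ℝ) + 1 / 2) n r * laguerre ((l : ℝ) + 1 / 2) n' r *
          r ^ ((l : ℝ) + (ν + 1) / 2) * Real.exp (-r))
      (fun r : ℝ => ∑ j ∈ Finset.range (n + 1), ∑ k ∈ Finset.range (n' + 1),
          (c j * d k) * (r ^ (b + (j:ℝ) + (k:ℝ)) * Real.exp (-r)))
      (Set.Ioi 0) := by
    intro r hr
    have hr0 : 0 < r := hr
    simp only [laguerre, hαb]
    rw [Finset.sum_mul_sum]
    rw [Finset.sum_mul, Finset.sum_mul]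
    apply Finset.sum_congr rfl
    intro j _
    rw [Finset.sum_mul, Finset.sum_mul]
    apply Finset.sum_congr rfl
    intro k _
    have hrj : (r:ℝ)^j = r ^ ((j:ℕ):ℝ) := (Real.rpow_natCast r j).symm
    have hrk : (r:ℝ)^k = r ^ ((k:ℕ):ℝ) := (Real.rpow_natCast r k).symm
    have hmulpow : r ^ ((j:ℕ):ℝ) * r ^ ((k:ℕ):ℝ) * r ^ b = r ^ (b + (j:ℝ) + (k:ℝ)) := by
      rw [← Real.rpow_add hr0, ← Real.rpow_add hr0]
      congr 1
      ring
    simp only [hc, hd]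
    rw [hrj, hrk, ← hmulpow]
    ring
  rw [MeasureTheory.setIntegral_congr_fun measurableSet_Ioi hcong]
  rw [MeasureTheory.integral_finset_sum _ (fun j _ =>
    MeasureTheory.integrable_finset_sum _ (fun k _ => ((hInt j k).const_mul (c j * d k))))]
  have hinner : ∀ j ∈ Finset.range (n + 1),
      ∫ r in Set.Ioi (0:ℝ), ∑ k ∈ Finset.range (n' + 1),
          (c j * d k) * (r ^ (b + (j:ℝ) + (k:ℝ)) * Real.exp (-r))
      = ∑ k ∈ Finset.range (n' + 1),
          (c j * d k) * (Real.Gamma (b + 1) * ∏ i ∈ Finset.range (j + k), (b + 1 + i)) := by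
    intro j _
    rw [MeasureTheory.integral_finset_sum _ (fun k _ => ((hInt j k).const_mul (c j * d k)))]
    apply Finset.sum_congr rfl
    intro k _
    rw [MeasureTheory.integral_const_mul, integral_rpow_exp (hexp j k)]
    congr 1
    have := Gamma_prod (b + 1) (by linarith) (j + k)
    rw [← this]
    congr 1
    push_cast
    ring
  rw [Finset.sum_congr rfl hinner]
  have hfinal : ∑ j ∈ Finset.range (n + 1), ∑ k ∈ Finset.range (n' + 1),
      (c j * d k) * (Real.Gamma (b + 1) * ∏ i ∈ Finset.range (j + k), (b + 1 + i))
      = Real.Gamma (b + 1) * ∑ j ∈ Finset.range (n + 1), ∑ k ∈ Finset.range (n' + 1),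
          (c j * d k) * ∏ i ∈ Finset.range (j + k), (b + 1 + i) := by
    rw [Finset.mul_sum]
    apply Finset.sum_congr rfl
    intro j _
    rw [Finset.mul_sum]
    exact Finset.sum_congr rfl (fun k _ => by ring)
  rw [hfinal, key n n' u b]
  have hG : Real.Gamma (b + 1) = Real.Gamma ((l:ℝ) + 1 + (ν + 1) / 2) := by
    congr 1; rw [hb]; ring
  rw [hG]
  have hsum : ∑ k ∈ Finset.range (min n n' + 1),
      genBinom u (n - k) * genBinom u (n' - k) * genBinom ((k:ℝ) + b) k
      = ∑ k ∈ Finset.range (min n n' + 1),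
          genBinom (ν / 2) (n - k) * genBinom (ν / 2) (n' - k) *
            genBinom ((k : ℝ) + l + (ν + 1) / 2) k := by
    apply Finset.sum_congr rfl
    intro k _
    rw [hu, hb]
    congr 2
    ring
  rw [hsum]
  ring
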